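/- Let M ⊂ ℝⁿ be a compact convex set of width w and let x₁,...,x_k ∈ M with k < n. Then there exists a plank P of width at least w/2 whose bounding hyperplanes intersect M and whose open interior contains none of the points xᵢ. -/

import Mathlib

open scoped RealInnerProductSpace

variable {n : ℕ}

/-- The width of `C` in the direction of the unit vector `u`. -/
noncomputable def dirWidth (C : Set (EuclideanSpace ℝ (Fin n)))
    (u : EuclideanSpace ℝ (Fin n)) : ℝ :=
  sSup ((fun x => ⟪u, x⟫) '' C) - sInf ((fun x => ⟪u, x⟫) '' C)

/-- The width of a set `C ⊂ ℝⁿ`. -/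
noncomputable def setWidth (C : Set (EuclideanSpace ℝ (Fin n))) : ℝ :=
  sInf (dirWidth C '' {u | ‖u‖ = 1})

theorem stmt8 {k : ℕ} (hn : 1 ≤ n) (hk : k < n)
    (M : Set (EuclideanSpace ℝ (Fin n))) (hMc : IsCompact M) (hMconv : Convex ℝ M)
    (hMne : M.Nonempty)
    (x : Fin k → EuclideanSpace ℝ (Fin n)) (hx : ∀ i, x i ∈ M)
    (w : ℝ) (hw : w = setWidth M) :
    ∃ (u : EuclideanSpace ℝ (Fin n)) (a b : ℝ), ‖u‖ = 1 ∧ a ≤ b ∧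
      w / 2 ≤ b - a ∧
      (∃ p ∈ M, ⟪u, p⟫ = a) ∧ (∃ p ∈ M, ⟪u, p⟫ = b) ∧
      ∀ i : Fin k, ¬ (a < ⟪u, x i⟫ ∧ ⟪u, x i⟫ < b) := by
  classical
  subst hw
  -- find a unit vector orthogonal to all the points x i
  set V : Submodule ℝ (EuclideanSpace ℝ (Fin n)) := Submodule.span ℝ (Set.range x) with hV
  have hdimV : Module.finrank ℝ V ≤ k := by
    simpa [Set.finrank] using finrank_range_le_card (R := ℝ) x
  have hsum : Module.finrank ℝ V + Module.finrank ℝ Vᗮ = n := by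
    simpa [finrank_euclideanSpace_fin] using V.finrank_add_finrank_orthogonal
  have hpos : 0 < Module.finrank ℝ Vᗮ := by omega
  have hne_bot : Vᗮ ≠ ⊥ := by
    intro h
    rw [h] at hpos
    simp [finrank_bot] at hpos
  obtain ⟨v, hvV, hv0⟩ := Submodule.exists_mem_ne_zero_of_ne_bot hne_bot
  have hvnorm : ‖v‖ ≠ 0 := norm_ne_zero_iff.mpr hv0
  set u : EuclideanSpace ℝ (Fin n) := ‖v‖⁻¹ • v with hu
  have hu1 : ‖u‖ = 1 := by
    rw [hu, norm_smul, norm_inv, norm_norm, inv_mul_cancel₀ hvnorm]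
  have hux : ∀ i, ⟪u, x i⟫ = 0 := by
    intro i
    have hxi : x i ∈ V := Submodule.subset_span ⟨i, rfl⟩
    have : ⟪v, x i⟫ = 0 := by
      have := hvV (x i) hxi
      rwa [real_inner_comm] at this
    rw [hu, real_inner_smul_left, this, mul_zero]
  -- study the function f = ⟪u, ·⟫ on M
  set f : EuclideanSpace ℝ (Fin n) → ℝ := fun p => ⟪u, p⟫ with hf
  have hfc : Continuous f := continuous_const.inner continuous_id
  obtain ⟨pm, hpmM, hpm⟩ := hMc.exists_isMinOn hMne hfc.continuousOn
  obtain ⟨pM, hpMM, hpM⟩ := hMc.exists_isMaxOn hMne hfc.continuousOn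
  have hInf : sInf (f '' M) = f pm := by
    apply IsLeast.csInf_eq
    exact ⟨⟨pm, hpmM, rfl⟩, by rintro _ ⟨q, hq, rfl⟩; exact hpm hq⟩
  have hSup : sSup (f '' M) = f pM := by
    apply IsGreatest.csSup_eq
    exact ⟨⟨pM, hpMM, rfl⟩, by rintro _ ⟨q, hq, rfl⟩; exact hpM hq⟩
  have hdw : dirWidth M u = f pM - f pm := by
    rw [dirWidth, hInf, hSup]
  -- every directional width is nonnegative
  have hnonneg : ∀ z ∈ dirWidth M '' {u | ‖u‖ = 1}, (0:ℝ) ≤ z := by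
    rintro _ ⟨v', hv', rfl⟩
    have hne : ((fun x => ⟪v', x⟫) '' M).Nonempty := hMne.image _
    have hcpt : IsCompact ((fun x => ⟪v', x⟫) '' M) :=
      hMc.image (continuous_const.inner continuous_id)
    have := csInf_le_csSup hne hcpt.bddBelow hcpt.bddAbove
    simpa [dirWidth] using this
  have hwle : setWidth M ≤ dirWidth M u := by
    apply csInf_le ⟨0, fun z hz => hnonneg z hz⟩
    exact ⟨u, hu1, rfl⟩
  have hw0 : 0 ≤ setWidth M := by
    have hne : (dirWidth M '' {u | ‖u‖ = 1}).Nonempty := ⟨dirWidth M u, ⟨u, hu1, rfl⟩⟩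
    apply le_csInf hne
    exact fun z hz => hnonneg z hz
  have hwle' : setWidth M ≤ f pM - f pm := hdw ▸ hwle
  rcases Nat.eq_zero_or_pos k with hk0 | hk0
  · -- no points: take the whole slab
    refine ⟨u, f pm, f pM, hu1, hpm hpMM, by linarith, ⟨pm, hpmM, rfl⟩, ⟨pM, hpMM, rfl⟩, ?_⟩
    intro i; exact absurd (by omega : (i : ℕ) < 0) (by omega)
  · have i0 : Fin k := ⟨0, hk0⟩
    have hm0 : f pm ≤ 0 := (hpm (hx i0)).trans_eq (hux i0)
    have hM0 : 0 ≤ f pM := le_of_eq_of_le (hux i0).symm (hpM (hx i0))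
    rcases le_or_gt ((f pM - f pm) / 2) (0 - f pm) with hcase | hcase
    · refine ⟨u, f pm, 0, hu1, hm0, by linarith, ⟨pm, hpmM, rfl⟩, ⟨x i0, hx i0, hux i0⟩, ?_⟩
      intro i hi
      rw [hux i] at hi
      exact lt_irrefl 0 hi.2
    · refine ⟨u, 0, f pM, hu1, hM0, by linarith, ⟨x i0, hx i0, hux i0⟩, ⟨pM, hpMM, rfl⟩, ?_⟩
      intro i hi
      rw [hux i] at hi
      exact lt_irrefl 0 hi.1
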